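/- For every natural number k, if ρ^k·(1/2 − ρ) < ε < ρ^k·√(1/3 − ρ + ρ² − ρ³ + ρ⁴), then the complement ℝ² \ S_ε has at least 3^k distinct connected components that are bounded sets. -/

import Mathlib

open Metric Set Bornology

/-- The vertices of the unit equilateral triangle. -/
noncomputable def v0 : EuclideanSpace ℝ (Fin 2) :=
  (WithLp.equiv 2 (Fin 2 → ℝ)).symm ![0, 0]

noncomputable def v1 : EuclideanSpace ℝ (Fin 2) :=
  (WithLp.equiv 2 (Fin 2 → ℝ)).symm ![1, 0]

noncomputable def v2 : EuclideanSpace ℝ (Fin 2) :=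
  (WithLp.equiv 2 (Fin 2 → ℝ)).symm ![1 / 2, Real.sqrt 3 / 2]

/-- The homothety with center `v0` (resp. `v1`, `v2`) and ratio `ρ`. -/
noncomputable def f0 (ρ : ℝ) (x : EuclideanSpace ℝ (Fin 2)) : EuclideanSpace ℝ (Fin 2) :=
  v0 + ρ • (x - v0)

noncomputable def f1 (ρ : ℝ) (x : EuclideanSpace ℝ (Fin 2)) : EuclideanSpace ℝ (Fin 2) :=
  v1 + ρ • (x - v1)

noncomputable def f2 (ρ : ℝ) (x : EuclideanSpace ℝ (Fin 2)) : EuclideanSpace ℝ (Fin 2) :=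
  v2 + ρ • (x - v2)

/-- The union of the images of a set under the three homotheties. -/
noncomputable def sierpPhi (ρ : ℝ) (X : Set (EuclideanSpace ℝ (Fin 2))) :
    Set (EuclideanSpace ℝ (Fin 2)) :=
  f0 ρ '' X ∪ f1 ρ '' X ∪ f2 ρ '' X

/-- The filled equilateral triangle. -/
noncomputable def sierpT : Set (EuclideanSpace ℝ (Fin 2)) :=
  convexHull ℝ {v0, v1, v2}

/-- The generalized Sierpinski triangle with contraction ratio `ρ`. -/
noncomputable def sierpinski (ρ : ℝ) : Set (EuclideanSpace ℝ (Fin 2)) :=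
  ⋂ k : ℕ, (sierpPhi ρ)^[k] sierpT


namespace SierpAux

abbrev EE := EuclideanSpace ℝ (Fin 2)

noncomputable def V : Fin 3 → EE := ![v0, v1, v2]

noncomputable def ctr : EE := (WithLp.equiv 2 (Fin 2 → ℝ)).symm ![1/2, Real.sqrt 3 / 6]

noncomputable def F (ρ : ℝ) (i : Fin 3) (x : EE) : EE := V i + ρ • (x - V i)

@[simp] lemma v0_c0 : v0 0 = 0 := rfl
@[simp] lemma v0_c1 : v0 1 = 0 := rfl
@[simp] lemma v1_c0 : v1 0 = 1 := rfl
@[simp] lemma v1_c1 : v1 1 = 0 := rfl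
@[simp] lemma v2_c0 : v2 0 = 1/2 := rfl
@[simp] lemma v2_c1 : v2 1 = Real.sqrt 3 / 2 := rfl
@[simp] lemma ctr_c0 : ctr 0 = 1/2 := rfl
@[simp] lemma ctr_c1 : ctr 1 = Real.sqrt 3 / 6 := rfl
@[simp] lemma V_0 : V 0 = v0 := rfl
@[simp] lemma V_1 : V 1 = v1 := rfl
@[simp] lemma V_2 : V 2 = v2 := rfl

lemma ee_ext {p q : EE} (h0 : p 0 = q 0) (h1 : p 1 = q 1) : p = q := by
  apply (WithLp.equiv 2 (Fin 2 → ℝ)).injective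
  funext i
  fin_cases i
  · exact h0
  · exact h1

@[simp] lemma add_c (p q : EE) (i : Fin 2) : (p + q) i = p i + q i := rfl
@[simp] lemma sub_c (p q : EE) (i : Fin 2) : (p - q) i = p i - q i := rfl
@[simp] lemma smul_c (r : ℝ) (p : EE) (i : Fin 2) : (r • p) i = r * p i := rfl
@[simp] lemma zero_c (i : Fin 2) : (0 : EE) i = 0 := rfl

lemma F_c (ρ : ℝ) (i : Fin 3) (x : EE) (j : Fin 2) :
    F ρ i x j = V i j + ρ * (x j - V i j) := rfl

lemma dist_coord (x y : EE) : dist x y = Real.sqrt ((x 0 - y 0)^2 + (x 1 - y 1)^2) := by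
  rw [EuclideanSpace.dist_eq]
  simp [Fin.sum_univ_two, Real.dist_eq, sq_abs]

lemma sqrt3_sq : Real.sqrt 3 ^ 2 = 3 := Real.sq_sqrt (by norm_num)
lemma sqrt3_nonneg : 0 ≤ Real.sqrt 3 := Real.sqrt_nonneg 3
lemma sqrt3_pos : 0 < Real.sqrt 3 := Real.sqrt_pos.2 (by norm_num)
lemma sqrt3_le_two : Real.sqrt 3 ≤ 2 := by
  nlinarith [sqrt3_sq, sqrt3_nonneg]
lemma one_le_sqrt3 : 1 ≤ Real.sqrt 3 := by
  nlinarith [sqrt3_sq, sqrt3_nonneg]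

lemma F_dist {ρ : ℝ} (hρ : 0 ≤ ρ) (i : Fin 3) (x y : EE) :
    dist (F ρ i x) (F ρ i y) = ρ * dist x y := by
  rw [dist_coord, dist_coord]
  have h0 : F ρ i x 0 - F ρ i y 0 = ρ * (x 0 - y 0) := by rw [F_c, F_c]; ring
  have h1 : F ρ i x 1 - F ρ i y 1 = ρ * (x 1 - y 1) := by rw [F_c, F_c]; ring
  rw [h0, h1, show (ρ*(x 0 - y 0))^2 + (ρ*(x 1 - y 1))^2
      = ρ^2 * ((x 0 - y 0)^2 + (x 1 - y 1)^2) by ring,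
    Real.sqrt_mul (sq_nonneg ρ), Real.sqrt_sq hρ]

lemma F_inj {ρ : ℝ} (hρ : 0 < ρ) (i : Fin 3) : Function.Injective (F ρ i) := by
  intro a b hab
  apply ee_ext
  · have := congrArg (fun p : EE => p 0) hab
    simp only [F_c] at this
    field_simp at this
    rcases mul_eq_mul_left_iff.1 (show ρ * a 0 = ρ * b 0 by linarith) with h | h
    · linarith
    · exact absurd h (ne_of_gt hρ)
  · have := congrArg (fun p : EE => p 1) hab
    simp only [F_c] at this
    field_simp at this
    rcases mul_eq_mul_left_iff.1 (show ρ * a 1 = ρ * b 1 by linarith) with h | h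
    · linarith
    · exact absurd h (ne_of_gt hρ)

lemma convex_halfplane (a b m : ℝ) : Convex ℝ {p : EE | a * p 0 + b * p 1 ≤ m} := by
  intro x hx y hy s t hs ht hst
  simp only [mem_setOf_eq] at *
  have e0 : (s • x + t • y) 0 = s * x 0 + t * y 0 := rfl
  have e1 : (s • x + t • y) 1 = s * x 1 + t * y 1 := rfl
  rw [e0, e1]
  have ht' : t = 1 - s := by linarith
  rw [ht']
  nlinarith [mul_le_mul_of_nonneg_left hx hs, mul_le_mul_of_nonneg_left hy ht]

lemma mem_sierpT_iff (p : EE) :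
    p ∈ sierpT ↔ 0 ≤ p 1 ∧ p 1 ≤ Real.sqrt 3 * p 0 ∧ p 1 ≤ Real.sqrt 3 * (1 - p 0) := by
  constructor
  · intro hp
    refine ⟨?_, ?_, ?_⟩
    · have h := convexHull_min (show {v0, v1, v2} ⊆ {q : EE | (0:ℝ) * q 0 + (-1) * q 1 ≤ 0} by
        intro q hq
        rcases hq with rfl | rfl | rfl <;> simp [sqrt3_nonneg] <;> nlinarith [sqrt3_nonneg])
        (convex_halfplane 0 (-1) 0) hp
      simp only [mem_setOf_eq] at h; linarith
    · have h := convexHull_min (show {v0, v1, v2} ⊆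
          {q : EE | (-(Real.sqrt 3)) * q 0 + (1:ℝ) * q 1 ≤ 0} by
        intro q hq
        rcases hq with rfl | rfl | rfl <;> simp <;> nlinarith [sqrt3_nonneg])
        (convex_halfplane (-(Real.sqrt 3)) 1 0) hp
      simp only [mem_setOf_eq] at h; linarith
    · have h := convexHull_min (show {v0, v1, v2} ⊆
          {q : EE | (Real.sqrt 3) * q 0 + (1:ℝ) * q 1 ≤ Real.sqrt 3} by
        intro q hq
        rcases hq with rfl | rfl | rfl <;> simp <;> nlinarith [sqrt3_nonneg])
        (convex_halfplane (Real.sqrt 3) 1 (Real.sqrt 3)) hp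
      simp only [mem_setOf_eq] at h; linarith
  · rintro ⟨h1, h2, h3⟩
    -- weights
    set w1 : ℝ := p 0 - p 1 / Real.sqrt 3 with hw1def
    set w2 : ℝ := 2 * p 1 / Real.sqrt 3 with hw2def
    have hs3 := sqrt3_pos
    have hq3 := sqrt3_sq
    have hw1 : 0 ≤ w1 := by
      rw [hw1def, sub_nonneg, div_le_iff₀ hs3]
      nlinarith
    have hw2 : 0 ≤ w2 := by positivity
    have hw12 : w1 + w2 ≤ 1 := by
      have hd : p 1 / Real.sqrt 3 ≤ 1 - p 0 := by
        rw [div_le_iff₀ hs3]; nlinarith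
      rw [hw1def, hw2def]
      have : 2 * p 1 / Real.sqrt 3 = 2 * (p 1 / Real.sqrt 3) := by ring
      rw [this]
      linarith
    have key : p = (1 - w1 - w2) • v0 + (w1 • v1 + w2 • v2) := by
      apply ee_ext
      · show p 0 = (1 - w1 - w2) * v0 0 + (w1 * v1 0 + w2 * v2 0)
        simp only [v0_c0, v1_c0, v2_c0]
        rw [hw1def, hw2def]
        field_simp
        ring
      · show p 1 = (1 - w1 - w2) * v0 1 + (w1 * v1 1 + w2 * v2 1)
        simp only [v0_c1, v1_c1, v2_c1]
        rw [hw1def, hw2def]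
        field_simp
        ring
    rw [key]
    have hT : Convex ℝ (convexHull ℝ {v0, v1, v2} : Set EE) := convex_convexHull ℝ _
    have m0 : v0 ∈ sierpT := subset_convexHull ℝ _ (by simp)
    have m1 : v1 ∈ sierpT := subset_convexHull ℝ _ (by simp)
    have m2 : v2 ∈ sierpT := subset_convexHull ℝ _ (by simp)
    by_cases hz : w1 + w2 = 0
    · have h1' : w1 = 0 := by linarith
      have h2' : w2 = 0 := by linarith
      rw [h1', h2']
      simpa using m0
    · have hpos : 0 < w1 + w2 := lt_of_le_of_ne (by linarith) (Ne.symm hz)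
      have hq : w1 • v1 + w2 • v2 = (w1 + w2) • ((w1/(w1+w2)) • v1 + (w2/(w1+w2)) • v2) := by
        rw [smul_add, smul_smul, smul_smul]
        rw [mul_div_cancel₀ _ (ne_of_gt hpos), mul_div_cancel₀ _ (ne_of_gt hpos)]
      have hmid : (w1/(w1+w2)) • v1 + (w2/(w1+w2)) • v2 ∈ sierpT := by
        apply hT m1 m2 (by positivity) (by positivity)
        rw [← add_div, div_self (ne_of_gt hpos)]
      rw [hq]
      exact hT m0 hmid (by linarith) (by linarith) (by ring)

noncomputable def Lu : Fin 3 → EE → ℝ := fun i p =>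
  match i with
  | 0 => (Real.sqrt 3 * (1 - p 0) - p 1) / 2
  | 1 => (Real.sqrt 3 * p 0 - p 1) / 2
  | 2 => p 1

lemma Lu_affine (i : Fin 3) (a x : EE) (t : ℝ) :
    Lu i (a + t • (x - a)) = (1 - t) * Lu i a + t * Lu i x := by
  fin_cases i <;> simp [Lu] <;> ring

lemma Lu_F (ρ : ℝ) (i j : Fin 3) (x : EE) :
    Lu i (F ρ j x) = (1 - ρ) * Lu i (V j) + ρ * Lu i x := Lu_affine i (V j) x ρ

lemma Lu_V (i j : Fin 3) : Lu i (V j) = if i = j then Real.sqrt 3 / 2 else 0 := by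
  fin_cases i <;> fin_cases j <;> simp [Lu] <;> ring

lemma Lu_V_self (i : Fin 3) : Lu i (V i) = Real.sqrt 3 / 2 := by rw [Lu_V]; simp
lemma Lu_V_ne {i j : Fin 3} (h : i ≠ j) : Lu i (V j) = 0 := by rw [Lu_V, if_neg h]

lemma Lu_nonneg_T {p : EE} (hp : p ∈ sierpT) (i : Fin 3) : 0 ≤ Lu i p := by
  obtain ⟨h1, h2, h3⟩ := (mem_sierpT_iff p).1 hp
  fin_cases i <;> simp [Lu] <;> linarith

lemma Lu_sum (p : EE) : Lu 0 p + Lu 1 p + Lu 2 p = Real.sqrt 3 / 2 := by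
  simp [Lu]; ring

lemma Lu_le_T {p : EE} (hp : p ∈ sierpT) (i : Fin 3) : Lu i p ≤ Real.sqrt 3 / 2 := by
  have h0 := Lu_nonneg_T hp 0
  have h1 := Lu_nonneg_T hp 1
  have h2 := Lu_nonneg_T hp 2
  fin_cases i <;> simp [Lu] at h0 h1 h2 ⊢ <;> linarith

lemma cs2 (a b d0 d1 : ℝ) (h : a^2 + b^2 ≤ 1) :
    a * d0 + b * d1 ≤ Real.sqrt (d0^2 + d1^2) := by
  have hs := Real.sq_sqrt (show (0:ℝ) ≤ d0^2 + d1^2 by positivity)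
  have hn := Real.sqrt_nonneg (d0^2 + d1^2)
  nlinarith [sq_nonneg (a*d1 - b*d0),
    mul_nonneg (sub_nonneg.2 h) (show (0:ℝ) ≤ d0^2 + d1^2 by positivity)]

lemma Lu_lipschitz (i : Fin 3) (p q : EE) : Lu i p - Lu i q ≤ dist p q := by
  have hd : dist p q = Real.sqrt ((p 0 - q 0)^2 + (p 1 - q 1)^2) := by
    rw [EuclideanSpace.dist_eq]; simp [Fin.sum_univ_two, Real.dist_eq, sq_abs]
  rw [hd]
  have hone : (-(Real.sqrt 3/2))^2 + (-(1/2) : ℝ)^2 ≤ 1 := by nlinarith [sqrt3_sq]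
  have hone2 : (Real.sqrt 3/2)^2 + (-(1/2) : ℝ)^2 ≤ 1 := by nlinarith [sqrt3_sq]
  have hone3 : (0:ℝ)^2 + (1:ℝ)^2 ≤ 1 := by norm_num
  fin_cases i
  · have := cs2 (-(Real.sqrt 3/2)) (-(1/2)) (p 0 - q 0) (p 1 - q 1) hone
    simp only [Lu]; linarith [this]
  · have := cs2 (Real.sqrt 3/2) (-(1/2)) (p 0 - q 0) (p 1 - q 1) hone2
    simp only [Lu]; linarith [this]
  · have := cs2 0 1 (p 0 - q 0) (p 1 - q 1) hone3
    simp only [Lu]; linarith [this]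

-- ## S basics
lemma V_mem_T (i : Fin 3) : V i ∈ sierpT := by
  fin_cases i <;> exact subset_convexHull ℝ _ (by simp)

lemma F_self (ρ : ℝ) (i : Fin 3) : F ρ i (V i) = V i := by
  apply ee_ext <;> simp [F_c]

lemma F_mem_T {ρ : ℝ} (h0 : 0 ≤ ρ) (h1 : ρ ≤ 1) (i : Fin 3) {x : EE} (hx : x ∈ sierpT) :
    F ρ i x ∈ sierpT := by
  have hc : F ρ i x = (1 - ρ) • V i + ρ • x := by
    apply ee_ext <;> simp [F_c] <;> ring
  rw [hc]
  exact (convex_convexHull ℝ _) (V_mem_T i) hx (by linarith) h0 (by ring)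

lemma mem_sierpPhi {ρ : ℝ} {X : Set EE} {y : EE} :
    y ∈ sierpPhi ρ X ↔ ∃ i : Fin 3, ∃ x ∈ X, F ρ i x = y := by
  have e0 : f0 ρ = F ρ 0 := rfl
  have e1 : f1 ρ = F ρ 1 := rfl
  have e2 : f2 ρ = F ρ 2 := rfl
  constructor
  · rintro ((⟨x, hx, rfl⟩ | ⟨x, hx, rfl⟩) | ⟨x, hx, rfl⟩)
    · exact ⟨0, x, hx, rfl⟩
    · exact ⟨1, x, hx, rfl⟩
    · exact ⟨2, x, hx, rfl⟩
  · rintro ⟨i, x, hx, rfl⟩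
    fin_cases i
    · exact Or.inl (Or.inl ⟨x, hx, rfl⟩)
    · exact Or.inl (Or.inr ⟨x, hx, rfl⟩)
    · exact Or.inr ⟨x, hx, rfl⟩

lemma F_mem_sierpPhi {ρ : ℝ} {X : Set EE} {x : EE} (hx : x ∈ X) (i : Fin 3) :
    F ρ i x ∈ sierpPhi ρ X := mem_sierpPhi.2 ⟨i, x, hx, rfl⟩

lemma sierpPhi_mono {ρ : ℝ} {X Y : Set EE} (h : X ⊆ Y) : sierpPhi ρ X ⊆ sierpPhi ρ Y := by
  intro y hy
  obtain ⟨i, x, hx, rfl⟩ := mem_sierpPhi.1 hy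
  exact F_mem_sierpPhi (h hx) i

lemma iter_subset_T {ρ : ℝ} (h0 : 0 ≤ ρ) (h1 : ρ ≤ 1) (n : ℕ) :
    (sierpPhi ρ)^[n] sierpT ⊆ sierpT := by
  induction n with
  | zero => simp
  | succ n ih =>
    rw [Function.iterate_succ_apply']
    intro y hy
    obtain ⟨i, x, hx, rfl⟩ := mem_sierpPhi.1 hy
    exact F_mem_T h0 h1 i (ih hx)

lemma iter_succ_subset {ρ : ℝ} (h0 : 0 ≤ ρ) (h1 : ρ ≤ 1) (n : ℕ) :
    (sierpPhi ρ)^[n+1] sierpT ⊆ (sierpPhi ρ)^[n] sierpT := by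
  induction n with
  | zero =>
    rw [Function.iterate_succ_apply']
    intro y hy
    obtain ⟨i, x, hx, rfl⟩ := mem_sierpPhi.1 hy
    simpa using F_mem_T h0 h1 i (by simpa using hx)
  | succ n ih =>
    rw [Function.iterate_succ_apply' (n := n + 1)]
    intro y hy
    obtain ⟨i, x, hx, rfl⟩ := mem_sierpPhi.1 hy
    rw [Function.iterate_succ_apply']
    exact F_mem_sierpPhi (ih hx) i

lemma iter_antitone {ρ : ℝ} (h0 : 0 ≤ ρ) (h1 : ρ ≤ 1) {m n : ℕ} (h : m ≤ n) :
    (sierpPhi ρ)^[n] sierpT ⊆ (sierpPhi ρ)^[m] sierpT := by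
  induction n with
  | zero => simp_all
  | succ n ih =>
    rcases Nat.lt_or_ge m (n+1) with hlt | hge
    · exact subset_trans (iter_succ_subset h0 h1 n) (ih (Nat.lt_succ_iff.1 hlt))
    · have : m = n + 1 := le_antisymm h hge
      subst this; exact subset_rfl

lemma S_subset_iter {ρ : ℝ} (n : ℕ) : sierpinski ρ ⊆ (sierpPhi ρ)^[n] sierpT :=
  Set.iInter_subset _ n

lemma S_subset_T {ρ : ℝ} : sierpinski ρ ⊆ sierpT := S_subset_iter 0

lemma V_mem_S {ρ : ℝ} (h0 : 0 ≤ ρ) (h1 : ρ ≤ 1) (i : Fin 3) : V i ∈ sierpinski ρ := by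
  apply Set.mem_iInter.2
  intro n
  induction n with
  | zero => simpa using V_mem_T i
  | succ n ih =>
    rw [Function.iterate_succ_apply']
    have := F_mem_sierpPhi (ρ := ρ) ih i
    rwa [F_self] at this

lemma F_S_subset {ρ : ℝ} (h0 : 0 ≤ ρ) (h1 : ρ ≤ 1) (i : Fin 3) :
    F ρ i '' sierpinski ρ ⊆ sierpinski ρ := by
  rintro y ⟨x, hx, rfl⟩
  apply Set.mem_iInter.2
  intro n
  have h1' : x ∈ (sierpPhi ρ)^[n] sierpT := S_subset_iter n hx
  have h2' : F ρ i x ∈ (sierpPhi ρ)^[n+1] sierpT := by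
    rw [Function.iterate_succ_apply']
    exact F_mem_sierpPhi h1' i
  exact iter_antitone h0 h1 (Nat.le_succ n) h2'

lemma S_decomp {ρ : ℝ} (hρ0 : 0 < ρ) (hρ1 : ρ ≤ 1) {y : EE} (hy : y ∈ sierpinski ρ) :
    ∃ i : Fin 3, ∃ z ∈ sierpinski ρ, y = F ρ i z := by
  have key : ∀ n : ℕ, ∃ i : Fin 3, y ∈ F ρ i '' ((sierpPhi ρ)^[n] sierpT) := by
    intro n
    have := S_subset_iter (n+1) hy
    rw [Function.iterate_succ_apply'] at this
    obtain ⟨i, x, hx, rfl⟩ := mem_sierpPhi.1 this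
    exact ⟨i, x, hx, rfl⟩
  choose g hg using key
  obtain ⟨i, hi⟩ := Finite.exists_infinite_fiber g
  have hinf : (g ⁻¹' {i}).Infinite := Set.infinite_coe_iff.1 hi
  have hmem : ∀ n : ℕ, y ∈ F ρ i '' ((sierpPhi ρ)^[n] sierpT) := by
    intro n
    obtain ⟨m, hm, hnm⟩ := hinf.exists_gt n
    have : y ∈ F ρ i '' ((sierpPhi ρ)^[m] sierpT) := by
      have := hg m; rwa [Set.mem_singleton_iff.1 hm] at this
    exact Set.image_mono (iter_antitone hρ0.le hρ1 hnm.le) this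
  -- extract the common preimage
  obtain ⟨z, hz0, hz⟩ := hmem 0
  refine ⟨i, z, ?_, hz.symm⟩
  apply Set.mem_iInter.2
  intro n
  obtain ⟨z', hz', hz'eq⟩ := hmem n
  have : z' = z := F_inj hρ0 i (by rw [hz'eq, hz])
  rwa [this] at hz'

-- ## word maps
noncomputable def fw (ρ : ℝ) : List (Fin 3) → EE → EE
  | [], x => x
  | i :: w, x => F ρ i (fw ρ w x)

lemma fw_dist {ρ : ℝ} (hρ : 0 ≤ ρ) (w : List (Fin 3)) (x y : EE) :
    dist (fw ρ w x) (fw ρ w y) = ρ ^ w.length * dist x y := by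
  induction w with
  | nil => simp [fw]
  | cons i t ih => simp [fw, F_dist hρ, ih]; ring

lemma fw_mem_T {ρ : ℝ} (h0 : 0 ≤ ρ) (h1 : ρ ≤ 1) (w : List (Fin 3)) {x : EE}
    (hx : x ∈ sierpT) : fw ρ w x ∈ sierpT := by
  induction w with
  | nil => exact hx
  | cons i t ih => exact F_mem_T h0 h1 i ih

lemma fw_mem_S {ρ : ℝ} (h0 : 0 ≤ ρ) (h1 : ρ ≤ 1) (w : List (Fin 3)) {x : EE}
    (hx : x ∈ sierpinski ρ) : fw ρ w x ∈ sierpinski ρ := by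
  induction w with
  | nil => exact hx
  | cons i t ih => exact F_S_subset h0 h1 i ⟨_, ih, rfl⟩

lemma fw_rep {ρ : ℝ} (w : List (Fin 3)) (x : EE) (j : Fin 2) :
    fw ρ w x j = fw ρ w 0 j + ρ ^ w.length * x j := by
  induction w with
  | nil => simp [fw]
  | cons i t ih =>
    simp only [fw, F_c, List.length_cons, ih]
    ring

lemma ctr_mem_T : ctr ∈ sierpT := by
  rw [mem_sierpT_iff]
  refine ⟨?_, ?_, ?_⟩ <;> simp <;> nlinarith [sqrt3_nonneg]

-- ## max lemma
lemma Lu_fw_ctr_le {ρ : ℝ} (h0 : 0 ≤ ρ) (h1 : ρ ≤ 1) (w : List (Fin 3)) (i : Fin 3) :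
    Lu i (fw ρ w ctr) ≤ Real.sqrt 3 / 2 - ρ ^ w.length * (Real.sqrt 3 / 3) := by
  induction w with
  | nil =>
    have hc : Lu i ctr = Real.sqrt 3 / 6 := by
      fin_cases i <;> simp [Lu] <;> ring
    simp only [fw, List.length_nil, pow_zero, one_mul, hc]
    linarith
  | cons j t ih =>
    have hV : Lu i (V j) ≤ Real.sqrt 3 / 2 := by
      rw [Lu_V]; split
      · exact le_refl _
      · positivity
    calc Lu i (fw ρ (j :: t) ctr) = (1-ρ) * Lu i (V j) + ρ * Lu i (fw ρ t ctr) := Lu_F ρ i j _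
      _ ≤ (1-ρ) * (Real.sqrt 3/2) + ρ * (Real.sqrt 3/2 - ρ ^ t.length * (Real.sqrt 3/3)) := by
          have := mul_le_mul_of_nonneg_left ih h0
          have := mul_le_mul_of_nonneg_left hV (by linarith : (0:ℝ) ≤ 1 - ρ)
          linarith
      _ = Real.sqrt 3/2 - ρ ^ (j :: t).length * (Real.sqrt 3/3) := by
          simp [List.length_cons]; ring

lemma sqrt_poly_le {ρ : ℝ} (hρ0 : 0 < ρ) (hρ : ρ ≤ 1/2) :
    Real.sqrt (1/3 - ρ + ρ^2 - ρ^3 + ρ^4) ≤ Real.sqrt 3 / 3 := by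
  have h13 : Real.sqrt (1/3 - ρ + ρ^2 - ρ^3 + ρ^4) ≤ Real.sqrt (1/3) := by
    apply Real.sqrt_le_sqrt
    nlinarith [mul_nonneg (mul_nonneg hρ0.le (by linarith : (0:ℝ) ≤ 1 - ρ))
      (by positivity : (0:ℝ) ≤ 1 + ρ^2)]
  have : Real.sqrt (1/3) = Real.sqrt 3 / 3 := by
    rw [show (1/3 : ℝ) = (Real.sqrt 3 / 3)^2 by rw [div_pow, sqrt3_sq]; norm_num]
    exact Real.sqrt_sq (by positivity)
  linarith

lemma poly_pos {ρ : ℝ} (hρ0 : 0 < ρ) (hρ : ρ ≤ 1/2) : 0 < 1/3 - ρ + ρ^2 - ρ^3 + ρ^4 := by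
  nlinarith [sq_nonneg (1 - 2*ρ), sq_nonneg ρ, sq_nonneg (ρ - ρ^2), mul_pos hρ0 hρ0,
    mul_nonneg (mul_nonneg hρ0.le hρ0.le) hρ0.le, sq_nonneg (ρ^2 - ρ)]

lemma T_weights {p : EE} (hp : p ∈ sierpT) :
    ∃ w1 w2 : ℝ, 0 ≤ w1 ∧ 0 ≤ w2 ∧ w1 + w2 ≤ 1 ∧
      p 0 = w1 + w2/2 ∧ p 1 = Real.sqrt 3 * (w2/2) := by
  obtain ⟨h1, h2, h3⟩ := (mem_sierpT_iff p).1 hp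
  have hs3 := sqrt3_pos
  have hq3 := sqrt3_sq
  refine ⟨p 0 - p 1/Real.sqrt 3, 2*p 1/Real.sqrt 3, ?_, ?_, ?_, by field_simp; ring, by field_simp⟩
  · rw [sub_nonneg, div_le_iff₀ hs3]; nlinarith
  · positivity
  · have hd : p 1 / Real.sqrt 3 ≤ 1 - p 0 := by rw [div_le_iff₀ hs3]; nlinarith
    have h2' : 2 * p 1 / Real.sqrt 3 = 2 * (p 1 / Real.sqrt 3) := by ring
    rw [h2']; linarith

lemma dist_cert (q u0 e1 s P Q : ℝ) (p y : EE)
    (hd0 : p 0 - y 0 = P) (hd1 : p 1 - y 1 = Real.sqrt 3 * Q)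
    (hq : 0 ≤ q) (hs : 0 ≤ s)
    (hpos : 0 < u0^2 + 3*e1^2)
    (hcs : q * (u0^2 + 3*e1^2) ≤ s^2)
    (hval : s ≤ u0 * P + 3 * e1 * Q) :
    Real.sqrt q ≤ dist p y := by
  rw [dist_coord, hd0, hd1]
  rw [show (Real.sqrt 3 * Q)^2 = 3 * Q^2 by rw [mul_pow, sqrt3_sq]]
  apply Real.sqrt_le_sqrt
  have h1 : s^2 ≤ (u0*P + 3*e1*Q)^2 := by nlinarith
  have h2 : (u0*P + 3*e1*Q)^2 ≤ (u0^2+3*e1^2) * (P^2 + 3*Q^2) := by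
    nlinarith [sq_nonneg (e1*P - u0*Q)]
  nlinarith [hpos]

lemma poly_pos' {ρ : ℝ} (hρ0 : 0 < ρ) (hρ : ρ ≤ 1/2) : 0 < 1/3 - ρ + ρ^2 - ρ^3 + ρ^4 := by
  nlinarith [sq_nonneg (1 - 2*ρ), mul_nonneg (mul_nonneg hρ0.le hρ0.le) hρ0.le,
    mul_nonneg (mul_nonneg (mul_nonneg hρ0.le hρ0.le) hρ0.le) hρ0.le,
    mul_nonneg (mul_nonneg (mul_nonneg hρ0.le hρ0.le) hρ0.le) (show (0:ℝ) ≤ 1 - 2*ρ by linarith)]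

set_option maxHeartbeats 3000000 in
lemma base_dist {ρ : ℝ} (hρ0 : 0 < ρ) (hρ : ρ ≤ 1/2) {y : EE} (hy : y ∈ sierpinski ρ) :
    Real.sqrt (1/3 - ρ + ρ^2 - ρ^3 + ρ^4) ≤ dist ctr y := by
  have h2 : y ∈ sierpPhi ρ (sierpPhi ρ sierpT) := by
    have h : y ∈ (sierpPhi ρ)^[1+1] sierpT := S_subset_iter 2 hy
    rw [Function.iterate_succ_apply', Function.iterate_one] at h
    exact h
  obtain ⟨a, x1, hx1, rfl⟩ := mem_sierpPhi.1 h2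
  obtain ⟨b, z, hzT, rfl⟩ := mem_sierpPhi.1 hx1
  obtain ⟨w1, w2, hw1, hw2, hw3, hz0, hz1⟩ := T_weights hzT
  fin_cases a <;> fin_cases b
  · -- case (0,0)
    refine dist_cert (1/3 - ρ + ρ^2 - ρ^3 + ρ^4) ((1/2)) ((1/6)) ((1/3) + (-1/2)*ρ^2)
      (((1/2)) - ρ^2 * (w1 + w2/2)) (((1/6)) - ρ^2 * (w2/2)) ctr _ ?_ ?_ ?_ ?_ ?_ ?_ ?_
    · simp only [F_c, Fin.isValue, Fin.zero_eta, Fin.mk_one, show (⟨2, by norm_num⟩ : Fin 3) = 2 from rfl, V_0, V_1, V_2, v0_c0, v0_c1, v1_c0, v1_c1, v2_c0, v2_c1, ctr_c0, ctr_c1]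
      rw [hz0]; ring
    · simp only [F_c, Fin.isValue, Fin.zero_eta, Fin.mk_one, show (⟨2, by norm_num⟩ : Fin 3) = 2 from rfl, V_0, V_1, V_2, v0_c0, v0_c1, v1_c0, v1_c1, v2_c0, v2_c1, ctr_c0, ctr_c1]
      rw [hz1]; ring
    · exact (poly_pos hρ0 hρ).le
    · exact by nlinarith [sq_nonneg ρ, hρ0.le, hρ]
    · exact by norm_num
    · exact by nlinarith [mul_nonneg (mul_nonneg hρ0.le hρ0.le) hρ0.le, sq_nonneg (1-2*ρ), sq_nonneg ρ, hρ0.le, hρ]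
    ·
      have hB0 : (0:ℝ) ≤ ((1/2)*ρ^2) := by positivity
      have hB1 : (0:ℝ) ≤ (0:ℝ) := le_refl 0
      have hB2 : (0:ℝ) ≤ (0:ℝ) := le_refl 0
      linarith [mul_nonneg (show (0:ℝ) ≤ 1 - w1 - w2 by linarith) hB0, mul_nonneg hw1 hB1, mul_nonneg hw2 hB2]
  · -- case (0,1)
    refine dist_cert (1/3 - ρ + ρ^2 - ρ^3 + ρ^4) ((1/2) + (-1)*ρ + (1/2)*ρ^2) ((1/6) + (-1/2)*ρ^2) ((1/3) + (-1)*ρ + (1)*ρ^2 + (-1)*ρ^3 + (1)*ρ^4)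
      (((1/2) + (-1)*ρ + (1)*ρ^2) - ρ^2 * (w1 + w2/2)) (((1/6)) - ρ^2 * (w2/2)) ctr _ ?_ ?_ ?_ ?_ ?_ ?_ ?_
    · simp only [F_c, Fin.isValue, Fin.zero_eta, Fin.mk_one, show (⟨2, by norm_num⟩ : Fin 3) = 2 from rfl, V_0, V_1, V_2, v0_c0, v0_c1, v1_c0, v1_c1, v2_c0, v2_c1, ctr_c0, ctr_c1]
      rw [hz0]; ring
    · simp only [F_c, Fin.isValue, Fin.zero_eta, Fin.mk_one, show (⟨2, by norm_num⟩ : Fin 3) = 2 from rfl, V_0, V_1, V_2, v0_c0, v0_c1, v1_c0, v1_c1, v2_c0, v2_c1, ctr_c0, ctr_c1]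
      rw [hz1]; ring
    · exact (poly_pos hρ0 hρ).le
    · exact by nlinarith [poly_pos hρ0 hρ]
    · exact by nlinarith [poly_pos hρ0 hρ]
    · exact le_of_eq (by ring)
    ·
      have hB0 : (0:ℝ) ≤ ((1/2)*ρ^2 + (-1/2)*ρ^3 + (-1/2)*ρ^4) := by nlinarith [mul_nonneg (sq_nonneg ρ) (show (0:ℝ) ≤ 1 - ρ - ρ^2 by nlinarith)]
      have hB1 : (0:ℝ) ≤ ((1/2)*ρ^3 + (-1)*ρ^4) := by nlinarith [mul_nonneg (mul_nonneg (mul_nonneg hρ0.le hρ0.le) hρ0.le) (show (0:ℝ) ≤ 1 - 2*ρ by linarith)]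
      have hB2 : (0:ℝ) ≤ (0:ℝ) := le_refl 0
      linarith [mul_nonneg (show (0:ℝ) ≤ 1 - w1 - w2 by linarith) hB0, mul_nonneg hw1 hB1, mul_nonneg hw2 hB2]
  · -- case (0,2)
    refine dist_cert (1/3 - ρ + ρ^2 - ρ^3 + ρ^4) ((1/2) + (-1/2)*ρ + (-1/2)*ρ^2) ((1/6) + (-1/2)*ρ + (1/2)*ρ^2) ((1/3) + (-1)*ρ + (1)*ρ^2 + (-1)*ρ^3 + (1)*ρ^4)
      (((1/2) + (-1/2)*ρ + (1/2)*ρ^2) - ρ^2 * (w1 + w2/2)) (((1/6) + (-1/2)*ρ + (1/2)*ρ^2) - ρ^2 * (w2/2)) ctr _ ?_ ?_ ?_ ?_ ?_ ?_ ?_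
    · simp only [F_c, Fin.isValue, Fin.zero_eta, Fin.mk_one, show (⟨2, by norm_num⟩ : Fin 3) = 2 from rfl, V_0, V_1, V_2, v0_c0, v0_c1, v1_c0, v1_c1, v2_c0, v2_c1, ctr_c0, ctr_c1]
      rw [hz0]; ring
    · simp only [F_c, Fin.isValue, Fin.zero_eta, Fin.mk_one, show (⟨2, by norm_num⟩ : Fin 3) = 2 from rfl, V_0, V_1, V_2, v0_c0, v0_c1, v1_c0, v1_c1, v2_c0, v2_c1, ctr_c0, ctr_c1]
      rw [hz1]; ring
    · exact (poly_pos hρ0 hρ).le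
    · exact by nlinarith [poly_pos hρ0 hρ]
    · exact by nlinarith [poly_pos hρ0 hρ]
    · exact le_of_eq (by ring)
    ·
      have hB0 : (0:ℝ) ≤ ((1/2)*ρ^2 + (-1/2)*ρ^3 + (-1/2)*ρ^4) := by nlinarith [mul_nonneg (sq_nonneg ρ) (show (0:ℝ) ≤ 1 - ρ - ρ^2 by nlinarith)]
      have hB1 : (0:ℝ) ≤ (0:ℝ) := le_refl 0
      have hB2 : (0:ℝ) ≤ ((1/2)*ρ^3 + (-1)*ρ^4) := by nlinarith [mul_nonneg (mul_nonneg (mul_nonneg hρ0.le hρ0.le) hρ0.le) (show (0:ℝ) ≤ 1 - 2*ρ by linarith)]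
      linarith [mul_nonneg (show (0:ℝ) ≤ 1 - w1 - w2 by linarith) hB0, mul_nonneg hw1 hB1, mul_nonneg hw2 hB2]
  · -- case (1,0)
    refine dist_cert (1/3 - ρ + ρ^2 - ρ^3 + ρ^4) ((-1/2) + (1)*ρ + (-1/2)*ρ^2) ((1/6) + (-1/2)*ρ^2) ((1/3) + (-1)*ρ + (1)*ρ^2 + (-1)*ρ^3 + (1)*ρ^4)
      (((-1/2) + (1)*ρ) - ρ^2 * (w1 + w2/2)) (((1/6)) - ρ^2 * (w2/2)) ctr _ ?_ ?_ ?_ ?_ ?_ ?_ ?_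
    · simp only [F_c, Fin.isValue, Fin.zero_eta, Fin.mk_one, show (⟨2, by norm_num⟩ : Fin 3) = 2 from rfl, V_0, V_1, V_2, v0_c0, v0_c1, v1_c0, v1_c1, v2_c0, v2_c1, ctr_c0, ctr_c1]
      rw [hz0]; ring
    · simp only [F_c, Fin.isValue, Fin.zero_eta, Fin.mk_one, show (⟨2, by norm_num⟩ : Fin 3) = 2 from rfl, V_0, V_1, V_2, v0_c0, v0_c1, v1_c0, v1_c1, v2_c0, v2_c1, ctr_c0, ctr_c1]
      rw [hz1]; ring
    · exact (poly_pos hρ0 hρ).le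
    · exact by nlinarith [poly_pos hρ0 hρ]
    · exact by nlinarith [poly_pos hρ0 hρ]
    · exact le_of_eq (by ring)
    ·
      have hB0 : (0:ℝ) ≤ ((1/2)*ρ^3 + (-1)*ρ^4) := by nlinarith [mul_nonneg (mul_nonneg (mul_nonneg hρ0.le hρ0.le) hρ0.le) (show (0:ℝ) ≤ 1 - 2*ρ by linarith)]
      have hB1 : (0:ℝ) ≤ ((1/2)*ρ^2 + (-1/2)*ρ^3 + (-1/2)*ρ^4) := by nlinarith [mul_nonneg (sq_nonneg ρ) (show (0:ℝ) ≤ 1 - ρ - ρ^2 by nlinarith)]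
      have hB2 : (0:ℝ) ≤ (0:ℝ) := le_refl 0
      linarith [mul_nonneg (show (0:ℝ) ≤ 1 - w1 - w2 by linarith) hB0, mul_nonneg hw1 hB1, mul_nonneg hw2 hB2]
  · -- case (1,1)
    refine dist_cert (1/3 - ρ + ρ^2 - ρ^3 + ρ^4) ((-1/2)) ((1/6)) ((1/3) + (-1/2)*ρ^2)
      (((-1/2) + (1)*ρ^2) - ρ^2 * (w1 + w2/2)) (((1/6)) - ρ^2 * (w2/2)) ctr _ ?_ ?_ ?_ ?_ ?_ ?_ ?_
    · simp only [F_c, Fin.isValue, Fin.zero_eta, Fin.mk_one, show (⟨2, by norm_num⟩ : Fin 3) = 2 from rfl, V_0, V_1, V_2, v0_c0, v0_c1, v1_c0, v1_c1, v2_c0, v2_c1, ctr_c0, ctr_c1]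
      rw [hz0]; ring
    · simp only [F_c, Fin.isValue, Fin.zero_eta, Fin.mk_one, show (⟨2, by norm_num⟩ : Fin 3) = 2 from rfl, V_0, V_1, V_2, v0_c0, v0_c1, v1_c0, v1_c1, v2_c0, v2_c1, ctr_c0, ctr_c1]
      rw [hz1]; ring
    · exact (poly_pos hρ0 hρ).le
    · exact by nlinarith [sq_nonneg ρ, hρ0.le, hρ]
    · exact by norm_num
    · exact by nlinarith [mul_nonneg (mul_nonneg hρ0.le hρ0.le) hρ0.le, sq_nonneg (1-2*ρ), sq_nonneg ρ, hρ0.le, hρ]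
    ·
      have hB0 : (0:ℝ) ≤ (0:ℝ) := le_refl 0
      have hB1 : (0:ℝ) ≤ ((1/2)*ρ^2) := by positivity
      have hB2 : (0:ℝ) ≤ (0:ℝ) := le_refl 0
      linarith [mul_nonneg (show (0:ℝ) ≤ 1 - w1 - w2 by linarith) hB0, mul_nonneg hw1 hB1, mul_nonneg hw2 hB2]
  · -- case (1,2)
    refine dist_cert (1/3 - ρ + ρ^2 - ρ^3 + ρ^4) ((-1/2) + (1/2)*ρ + (1/2)*ρ^2) ((1/6) + (-1/2)*ρ + (1/2)*ρ^2) ((1/3) + (-1)*ρ + (1)*ρ^2 + (-1)*ρ^3 + (1)*ρ^4)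
      (((-1/2) + (1/2)*ρ + (1/2)*ρ^2) - ρ^2 * (w1 + w2/2)) (((1/6) + (-1/2)*ρ + (1/2)*ρ^2) - ρ^2 * (w2/2)) ctr _ ?_ ?_ ?_ ?_ ?_ ?_ ?_
    · simp only [F_c, Fin.isValue, Fin.zero_eta, Fin.mk_one, show (⟨2, by norm_num⟩ : Fin 3) = 2 from rfl, V_0, V_1, V_2, v0_c0, v0_c1, v1_c0, v1_c1, v2_c0, v2_c1, ctr_c0, ctr_c1]
      rw [hz0]; ring
    · simp only [F_c, Fin.isValue, Fin.zero_eta, Fin.mk_one, show (⟨2, by norm_num⟩ : Fin 3) = 2 from rfl, V_0, V_1, V_2, v0_c0, v0_c1, v1_c0, v1_c1, v2_c0, v2_c1, ctr_c0, ctr_c1]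
      rw [hz1]; ring
    · exact (poly_pos hρ0 hρ).le
    · exact by nlinarith [poly_pos hρ0 hρ]
    · exact by nlinarith [poly_pos hρ0 hρ]
    · exact le_of_eq (by ring)
    ·
      have hB0 : (0:ℝ) ≤ (0:ℝ) := le_refl 0
      have hB1 : (0:ℝ) ≤ ((1/2)*ρ^2 + (-1/2)*ρ^3 + (-1/2)*ρ^4) := by nlinarith [mul_nonneg (sq_nonneg ρ) (show (0:ℝ) ≤ 1 - ρ - ρ^2 by nlinarith)]
      have hB2 : (0:ℝ) ≤ ((1/2)*ρ^3 + (-1)*ρ^4) := by nlinarith [mul_nonneg (mul_nonneg (mul_nonneg hρ0.le hρ0.le) hρ0.le) (show (0:ℝ) ≤ 1 - 2*ρ by linarith)]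
      linarith [mul_nonneg (show (0:ℝ) ≤ 1 - w1 - w2 by linarith) hB0, mul_nonneg hw1 hB1, mul_nonneg hw2 hB2]
  · -- case (2,0)
    refine dist_cert (1/3 - ρ + ρ^2 - ρ^3 + ρ^4) ((1/2)*ρ + (-1)*ρ^2) ((-1/3) + (1/2)*ρ) ((1/3) + (-1)*ρ + (1)*ρ^2 + (-1)*ρ^3 + (1)*ρ^4)
      (((1/2)*ρ) - ρ^2 * (w1 + w2/2)) (((-1/3) + (1/2)*ρ) - ρ^2 * (w2/2)) ctr _ ?_ ?_ ?_ ?_ ?_ ?_ ?_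
    · simp only [F_c, Fin.isValue, Fin.zero_eta, Fin.mk_one, show (⟨2, by norm_num⟩ : Fin 3) = 2 from rfl, V_0, V_1, V_2, v0_c0, v0_c1, v1_c0, v1_c1, v2_c0, v2_c1, ctr_c0, ctr_c1]
      rw [hz0]; ring
    · simp only [F_c, Fin.isValue, Fin.zero_eta, Fin.mk_one, show (⟨2, by norm_num⟩ : Fin 3) = 2 from rfl, V_0, V_1, V_2, v0_c0, v0_c1, v1_c0, v1_c1, v2_c0, v2_c1, ctr_c0, ctr_c1]
      rw [hz1]; ring
    · exact (poly_pos hρ0 hρ).le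
    · exact by nlinarith [poly_pos hρ0 hρ]
    · exact by nlinarith [poly_pos hρ0 hρ]
    · exact le_of_eq (by ring)
    ·
      have hB0 : (0:ℝ) ≤ ((1/2)*ρ^3 + (-1)*ρ^4) := by nlinarith [mul_nonneg (mul_nonneg (mul_nonneg hρ0.le hρ0.le) hρ0.le) (show (0:ℝ) ≤ 1 - 2*ρ by linarith)]
      have hB1 : (0:ℝ) ≤ (0:ℝ) := le_refl 0
      have hB2 : (0:ℝ) ≤ ((1/2)*ρ^2 + (-1/2)*ρ^3 + (-1/2)*ρ^4) := by nlinarith [mul_nonneg (sq_nonneg ρ) (show (0:ℝ) ≤ 1 - ρ - ρ^2 by nlinarith)]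
      linarith [mul_nonneg (show (0:ℝ) ≤ 1 - w1 - w2 by linarith) hB0, mul_nonneg hw1 hB1, mul_nonneg hw2 hB2]
  · -- case (2,1)
    refine dist_cert (1/3 - ρ + ρ^2 - ρ^3 + ρ^4) ((-1/2)*ρ + (1)*ρ^2) ((-1/3) + (1/2)*ρ) ((1/3) + (-1)*ρ + (1)*ρ^2 + (-1)*ρ^3 + (1)*ρ^4)
      (((-1/2)*ρ + (1)*ρ^2) - ρ^2 * (w1 + w2/2)) (((-1/3) + (1/2)*ρ) - ρ^2 * (w2/2)) ctr _ ?_ ?_ ?_ ?_ ?_ ?_ ?_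
    · simp only [F_c, Fin.isValue, Fin.zero_eta, Fin.mk_one, show (⟨2, by norm_num⟩ : Fin 3) = 2 from rfl, V_0, V_1, V_2, v0_c0, v0_c1, v1_c0, v1_c1, v2_c0, v2_c1, ctr_c0, ctr_c1]
      rw [hz0]; ring
    · simp only [F_c, Fin.isValue, Fin.zero_eta, Fin.mk_one, show (⟨2, by norm_num⟩ : Fin 3) = 2 from rfl, V_0, V_1, V_2, v0_c0, v0_c1, v1_c0, v1_c1, v2_c0, v2_c1, ctr_c0, ctr_c1]
      rw [hz1]; ring
    · exact (poly_pos hρ0 hρ).le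
    · exact by nlinarith [poly_pos hρ0 hρ]
    · exact by nlinarith [poly_pos hρ0 hρ]
    · exact le_of_eq (by ring)
    ·
      have hB0 : (0:ℝ) ≤ (0:ℝ) := le_refl 0
      have hB1 : (0:ℝ) ≤ ((1/2)*ρ^3 + (-1)*ρ^4) := by nlinarith [mul_nonneg (mul_nonneg (mul_nonneg hρ0.le hρ0.le) hρ0.le) (show (0:ℝ) ≤ 1 - 2*ρ by linarith)]
      have hB2 : (0:ℝ) ≤ ((1/2)*ρ^2 + (-1/2)*ρ^3 + (-1/2)*ρ^4) := by nlinarith [mul_nonneg (sq_nonneg ρ) (show (0:ℝ) ≤ 1 - ρ - ρ^2 by nlinarith)]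
      linarith [mul_nonneg (show (0:ℝ) ≤ 1 - w1 - w2 by linarith) hB0, mul_nonneg hw1 hB1, mul_nonneg hw2 hB2]
  · -- case (2,2)
    refine dist_cert (1/3 - ρ + ρ^2 - ρ^3 + ρ^4) (0:ℝ) ((-1/3)) ((1/3) + (-1/2)*ρ^2)
      (((1/2)*ρ^2) - ρ^2 * (w1 + w2/2)) (((-1/3) + (1/2)*ρ^2) - ρ^2 * (w2/2)) ctr _ ?_ ?_ ?_ ?_ ?_ ?_ ?_
    · simp only [F_c, Fin.isValue, Fin.zero_eta, Fin.mk_one, show (⟨2, by norm_num⟩ : Fin 3) = 2 from rfl, V_0, V_1, V_2, v0_c0, v0_c1, v1_c0, v1_c1, v2_c0, v2_c1, ctr_c0, ctr_c1]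
      rw [hz0]; ring
    · simp only [F_c, Fin.isValue, Fin.zero_eta, Fin.mk_one, show (⟨2, by norm_num⟩ : Fin 3) = 2 from rfl, V_0, V_1, V_2, v0_c0, v0_c1, v1_c0, v1_c1, v2_c0, v2_c1, ctr_c0, ctr_c1]
      rw [hz1]; ring
    · exact (poly_pos hρ0 hρ).le
    · exact by nlinarith [sq_nonneg ρ, hρ0.le, hρ]
    · exact by norm_num
    · exact by nlinarith [mul_nonneg (mul_nonneg hρ0.le hρ0.le) hρ0.le, sq_nonneg (1-2*ρ), sq_nonneg ρ, hρ0.le, hρ]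
    ·
      have hB0 : (0:ℝ) ≤ (0:ℝ) := le_refl 0
      have hB1 : (0:ℝ) ≤ (0:ℝ) := le_refl 0
      have hB2 : (0:ℝ) ≤ ((1/2)*ρ^2) := by positivity
      linarith [mul_nonneg (show (0:ℝ) ≤ 1 - w1 - w2 by linarith) hB0, mul_nonneg hw1 hB1, mul_nonneg hw2 hB2]

-- ## main distance lower bound
lemma dist_S_ge {ρ : ℝ} (hρ0 : 0 < ρ) (hρ : ρ ≤ 1/2) (w : List (Fin 3)) :
    ∀ y ∈ sierpinski ρ,
      ρ ^ w.length * Real.sqrt (1/3 - ρ + ρ^2 - ρ^3 + ρ^4) ≤ dist (fw ρ w ctr) y := by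
  have hρ1 : ρ ≤ 1 := by linarith
  induction w with
  | nil => intro y hy; simpa [fw] using base_dist hρ0 hρ hy
  | cons i t ih =>
    intro y hy
    obtain ⟨j, z, hz, rfl⟩ := S_decomp hρ0 hρ1 hy
    by_cases hij : j = i
    · subst hij
      have : dist (fw ρ (j :: t) ctr) (F ρ j z) = ρ * dist (fw ρ t ctr) z := by
        simp only [fw]; exact F_dist hρ0.le j _ _
      rw [this]
      have := ih z hz
      calc ρ ^ (j :: t).length * Real.sqrt (1/3 - ρ + ρ^2 - ρ^3 + ρ^4)
          = ρ * (ρ ^ t.length * Real.sqrt (1/3 - ρ + ρ^2 - ρ^3 + ρ^4)) := by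
            simp [List.length_cons]; ring
        _ ≤ ρ * dist (fw ρ t ctr) z := by
            exact mul_le_mul_of_nonneg_left this hρ0.le
    · -- separation by functional Lu j
      have hzT : z ∈ sierpT := S_subset_T hz
      have hy_lb : (1 - ρ) * (Real.sqrt 3 / 2) ≤ Lu j (F ρ j z) := by
        rw [Lu_F, Lu_V_self]
        nlinarith [Lu_nonneg_T hzT j, hρ0.le]
      have hx_ub : Lu j (fw ρ (i :: t) ctr) ≤ ρ * (Real.sqrt 3/2 - ρ ^ t.length * (Real.sqrt 3/3)) := by
        show Lu j (F ρ i (fw ρ t ctr)) ≤ _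
        rw [Lu_F, Lu_V_ne hij]
        have := Lu_fw_ctr_le hρ0.le hρ1 t j
        nlinarith [hρ0.le]
      have hlip := Lu_lipschitz j (F ρ j z) (fw ρ (i :: t) ctr)
      rw [dist_comm] at hlip
      have hQ : ρ ^ (i :: t).length * Real.sqrt (1/3 - ρ + ρ^2 - ρ^3 + ρ^4)
          ≤ (1 - ρ) * (Real.sqrt 3/2) - ρ * (Real.sqrt 3/2 - ρ ^ t.length * (Real.sqrt 3/3)) := by
        have h1 : ρ ^ (i :: t).length * Real.sqrt (1/3 - ρ + ρ^2 - ρ^3 + ρ^4)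
            ≤ ρ ^ (i :: t).length * (Real.sqrt 3 / 3) :=
          mul_le_mul_of_nonneg_left (sqrt_poly_le hρ0 hρ) (by positivity)
        have h2 : (1 - ρ) * (Real.sqrt 3/2) - ρ * (Real.sqrt 3/2 - ρ ^ t.length * (Real.sqrt 3/3))
            = (1 - 2*ρ) * (Real.sqrt 3/2) + ρ ^ (i::t).length * (Real.sqrt 3/3) := by
          simp [List.length_cons]; ring
        rw [h2]
        have : 0 ≤ (1 - 2*ρ) * (Real.sqrt 3/2) := by
          apply mul_nonneg (by linarith) (by positivity)
        linarith
      linarith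

noncomputable def seg (a b : Fin 3) (t : ℝ) : EE := V a + t • (V b - V a)

lemma seg_zero (a b : Fin 3) : seg a b 0 = V a := by
  apply ee_ext <;> simp [seg]

lemma seg_one (a b : Fin 3) : seg a b 1 = V b := by
  apply ee_ext <;> simp [seg]

lemma dist_V {a b : Fin 3} (hab : a ≠ b) : dist (V a) (V b) = 1 := by
  have h : (V a 0 - V b 0)^2 + (V a 1 - V b 1)^2 = 1 := by
    fin_cases a <;> fin_cases b <;> simp_all <;>
      first
        | linear_combination sqrt3_sq / 4
        | norm_num
  rw [dist_coord, h, Real.sqrt_one]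

lemma dist_seg {a b : Fin 3} (hab : a ≠ b) (s t : ℝ) :
    dist (seg a b s) (seg a b t) = |s - t| := by
  have h0 : seg a b s 0 - seg a b t 0 = (s - t) * (V b 0 - V a 0) := by simp [seg]; ring
  have h1 : seg a b s 1 - seg a b t 1 = (s - t) * (V b 1 - V a 1) := by simp [seg]; ring
  rw [dist_coord, h0, h1,
    show ((s-t)*(V b 0 - V a 0))^2 + ((s-t)*(V b 1 - V a 1))^2
      = (s-t)^2 * ((V b 0 - V a 0)^2 + (V b 1 - V a 1)^2) by ring]
  have hd := dist_V hab
  rw [dist_coord] at hd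
  have : (V a 0 - V b 0)^2 + (V a 1 - V b 1)^2 = 1 := by
    have hnn : (0:ℝ) ≤ (V a 0 - V b 0)^2 + (V a 1 - V b 1)^2 := by positivity
    nlinarith [Real.sq_sqrt hnn]
  rw [show (V b 0 - V a 0)^2 + (V b 1 - V a 1)^2 = (V a 0 - V b 0)^2 + (V a 1 - V b 1)^2 by ring,
    this, mul_one, Real.sqrt_sq_eq_abs]

lemma F_seg_a (ρ : ℝ) (a b : Fin 3) (t : ℝ) : F ρ a (seg a b t) = seg a b (ρ * t) := by
  apply ee_ext <;> simp [F_c, seg] <;> ring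

lemma F_seg_b (ρ : ℝ) (a b : Fin 3) (t : ℝ) : F ρ b (seg a b t) = seg a b (1 - ρ + ρ * t) := by
  apply ee_ext <;> simp [F_c, seg] <;> ring

lemma cantor {ρ : ℝ} (hρ0 : 0 < ρ) (hρ : ρ ≤ 1/2) :
    ∀ (n : ℕ) (a b : Fin 3), a ≠ b → ∀ t : ℝ, 0 ≤ t → t ≤ 1 →
      ∃ p ∈ sierpinski ρ, dist (seg a b t) p ≤ max (1/2 - ρ) (ρ^n/2) := by
  have hρ1 : ρ ≤ 1 := by linarith
  intro n
  induction n with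
  | zero =>
    intro a b hab t ht0 ht1
    rcases le_total t (1/2) with h | h
    · refine ⟨V a, V_mem_S hρ0.le hρ1 a, ?_⟩
      rw [← seg_zero a b, dist_seg hab]
      rw [abs_of_nonneg (by linarith)]
      simp only [pow_zero]
      exact le_max_of_le_right (by linarith)
    · refine ⟨V b, V_mem_S hρ0.le hρ1 b, ?_⟩
      rw [← seg_one a b, dist_seg hab]
      rw [abs_of_nonpos (by linarith)]
      simp only [pow_zero]
      exact le_max_of_le_right (by linarith)
  | succ n ih =>
    intro a b hab t ht0 ht1
    by_cases h1 : t ≤ ρ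
    · obtain ⟨p, hp, hd⟩ := ih a b hab (t/ρ) (by positivity) (by rw [div_le_one hρ0]; linarith)
      refine ⟨F ρ a p, F_S_subset hρ0.le hρ1 a ⟨p, hp, rfl⟩, ?_⟩
      have : seg a b t = F ρ a (seg a b (t/ρ)) := by
        rw [F_seg_a, mul_div_cancel₀ _ (ne_of_gt hρ0)]
      rw [this, F_dist hρ0.le]
      calc ρ * dist (seg a b (t/ρ)) p ≤ ρ * max (1/2 - ρ) (ρ^n/2) :=
            mul_le_mul_of_nonneg_left hd hρ0.le
        _ ≤ max (1/2 - ρ) (ρ^(n+1)/2) := by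
            rcases max_cases (1/2 - ρ) (ρ^n/2) with ⟨he, _⟩ | ⟨he, _⟩ <;> rw [he]
            · exact le_max_of_le_left (by nlinarith)
            · exact le_max_of_le_right (by rw [pow_succ]; nlinarith)
    · by_cases h2 : 1 - ρ ≤ t
      · obtain ⟨p, hp, hd⟩ := ih a b hab ((t - (1-ρ))/ρ)
          (by apply div_nonneg _ hρ0.le; linarith) (by rw [div_le_one hρ0]; linarith)
        refine ⟨F ρ b p, F_S_subset hρ0.le hρ1 b ⟨p, hp, rfl⟩, ?_⟩
        have : seg a b t = F ρ b (seg a b ((t - (1-ρ))/ρ)) := by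
          rw [F_seg_b, mul_div_cancel₀ _ (ne_of_gt hρ0)]
          ring_nf
        rw [this, F_dist hρ0.le]
        calc ρ * dist (seg a b ((t - (1-ρ))/ρ)) p ≤ ρ * max (1/2 - ρ) (ρ^n/2) :=
              mul_le_mul_of_nonneg_left hd hρ0.le
          _ ≤ max (1/2 - ρ) (ρ^(n+1)/2) := by
              rcases max_cases (1/2 - ρ) (ρ^n/2) with ⟨he, _⟩ | ⟨he, _⟩ <;> rw [he]
              · exact le_max_of_le_left (by nlinarith)
              · exact le_max_of_le_right (by rw [pow_succ]; nlinarith)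
      · rcases le_total t (1/2) with h3 | h3
        · refine ⟨F ρ a (V b), F_S_subset hρ0.le hρ1 a ⟨V b, V_mem_S hρ0.le hρ1 b, rfl⟩, ?_⟩
          have : F ρ a (V b) = seg a b ρ := by
            rw [← seg_one a b, F_seg_a, mul_one]
          rw [this, dist_seg hab, abs_of_nonneg (by linarith)]
          exact le_max_of_le_left (by linarith)
        · refine ⟨F ρ b (V a), F_S_subset hρ0.le hρ1 b ⟨V a, V_mem_S hρ0.le hρ1 a, rfl⟩, ?_⟩
          have : F ρ b (V a) = seg a b (1 - ρ) := by
            rw [← seg_zero a b, F_seg_b, mul_zero, add_zero]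
          rw [this, dist_seg hab, abs_of_nonpos (by linarith)]
          exact le_max_of_le_left (by linarith)

lemma seg01 (t : ℝ) : seg 0 1 t 0 = t ∧ seg 0 1 t 1 = 0 := by
  constructor <;> simp [seg]
lemma seg02 (t : ℝ) : seg 0 2 t 0 = t/2 ∧ seg 0 2 t 1 = Real.sqrt 3 * (t/2) := by
  constructor <;> simp [seg] <;> ring
lemma seg12 (t : ℝ) : seg 1 2 t 0 = 1 - t/2 ∧ seg 1 2 t 1 = Real.sqrt 3 * (t/2) := by
  constructor <;> simp [seg] <;> ring

noncomputable def mk2 (a b : ℝ) : EE := (WithLp.equiv 2 (Fin 2 → ℝ)).symm ![a, b]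
@[simp] lemma mk2_c0 (a b : ℝ) : mk2 a b 0 = a := rfl
@[simp] lemma mk2_c1 (a b : ℝ) : mk2 a b 1 = b := rfl
lemma mk2_eq (p : EE) : mk2 (p 0) (p 1) = p := by apply ee_ext <;> simp

-- the cell "gauge" function
noncomputable def gg (q0 q1 r : ℝ) (p : EE) : ℝ :=
  min ((Real.sqrt 3 * (q0 + r - p 0) - (p 1 - q1))/2)
    (min ((Real.sqrt 3 * (p 0 - q0) - (p 1 - q1))/2) (p 1 - q1))

lemma gg_cont (q0 q1 r : ℝ) : Continuous (gg q0 q1 r) := by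
  have h0 : Continuous fun p : EE => p 0 :=
    (continuous_apply (0 : Fin 2)).comp (PiLp.continuous_ofLp ..)
  have h1 : Continuous fun p : EE => p 1 :=
    (continuous_apply (1 : Fin 2)).comp (PiLp.continuous_ofLp ..)
  unfold gg
  fun_prop

lemma T_dist_ctr {x : EE} (hx : x ∈ sierpT) : dist x ctr ≤ 1 := by
  obtain ⟨h1, h2, h3⟩ := (mem_sierpT_iff x).1 hx
  rw [dist_coord]
  have harg : (x 0 - ctr 0)^2 + (x 1 - ctr 1)^2 ≤ 1 := by
    simp only [ctr_c0, ctr_c1]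
    have hx0l : 0 ≤ x 0 := by nlinarith [sqrt3_pos]
    have hx0u : x 0 ≤ 1 := by nlinarith [sqrt3_pos]
    have hx1u : 2 * x 1 ≤ Real.sqrt 3 := by linarith
    nlinarith [sqrt3_sq, sqrt3_pos,
      mul_nonneg h1 (show (0:ℝ) ≤ Real.sqrt 3 - 2*x 1 by linarith),
      mul_nonneg hx0l (show (0:ℝ) ≤ 1 - x 0 by linarith)]
  have := Real.sqrt_le_sqrt harg
  simpa using this

set_option maxHeartbeats 2000000 in
lemma main_comp {ρ ε : ℝ} (hρ0 : 0 < ρ) (hρ : ρ ≤ 1/2) (hε0 : 0 < ε)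
    (w : List (Fin 3)) (hε1 : ρ ^ w.length * (1/2 - ρ) < ε)
    (hctr : fw ρ w ctr ∈ (Metric.cthickening ε (sierpinski ρ))ᶜ) :
    connectedComponentIn (Metric.cthickening ε (sierpinski ρ))ᶜ (fw ρ w ctr)
      ⊆ fw ρ w '' sierpT ∩ Metric.closedBall (fw ρ w ctr) (ρ ^ w.length) := by
  have hρ1 : ρ ≤ 1 := by linarith
  set S := sierpinski ρ
  set r := ρ ^ w.length with hrdef
  have hr : 0 < r := pow_pos hρ0 _
  set q0 := fw ρ w 0 0 with hq0
  set q1 := fw ρ w 0 1 with hq1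
  have hrep0 : ∀ x : EE, fw ρ w x 0 = q0 + r * x 0 := fun x => fw_rep w x 0
  have hrep1 : ∀ x : EE, fw ρ w x 1 = q1 + r * x 1 := fun x => fw_rep w x 1
  -- preimage
  have hpre : ∀ p : EE, fw ρ w (mk2 ((p 0 - q0)/r) ((p 1 - q1)/r)) = p := by
    intro p
    apply ee_ext
    · rw [hrep0, mk2_c0]; field_simp; ring
    · rw [hrep1, mk2_c1]; field_simp; ring
  -- edge points are in the thickening
  have hedge : ∀ (a b : Fin 3), a ≠ b → ∀ t : ℝ, 0 ≤ t → t ≤ 1 →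
      fw ρ w (seg a b t) ∈ Metric.cthickening ε S := by
    intro a b hab t ht0 ht1
    obtain ⟨n, hn⟩ := exists_pow_lt_of_lt_one (show (0:ℝ) < 2*ε/r by positivity)
      (show ρ < 1 by linarith)
    obtain ⟨p, hpS, hpd⟩ := cantor hρ0 hρ n a b hab t ht0 ht1
    have hd : dist (fw ρ w (seg a b t)) (fw ρ w p) ≤ ε := by
      rw [fw_dist hρ0.le]
      have h1' : ρ ^ w.length * (ρ^n/2) ≤ ε := by
        rw [lt_div_iff₀ hr] at hn
        nlinarith
      calc ρ ^ w.length * dist (seg a b t) p ≤ ρ ^ w.length * max (1/2 - ρ) (ρ^n/2) :=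
            mul_le_mul_of_nonneg_left hpd (by positivity)
        _ ≤ ε := by
            rcases max_cases (1/2 - ρ) (ρ^n/2) with ⟨he, _⟩ | ⟨he, _⟩ <;> rw [he]
            · linarith
            · linarith
    rw [Metric.mem_cthickening_iff]
    calc Metric.infEDist (fw ρ w (seg a b t)) S
        ≤ edist (fw ρ w (seg a b t)) (fw ρ w p) :=
          Metric.infEDist_le_edist_of_mem (fw_mem_S hρ0.le hρ1 w hpS)
      _ ≤ ENNReal.ofReal ε := by rw [edist_dist]; exact ENNReal.ofReal_le_ofReal hd
  -- zero set of gg is contained in the thickening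
  have hzero : ∀ p : EE, gg q0 q1 r p = 0 → p ∈ Metric.cthickening ε S := by
    intro p hp
    unfold gg at hp
    set A := (Real.sqrt 3 * (q0 + r - p 0) - (p 1 - q1))/2 with hA
    set B := (Real.sqrt 3 * (p 0 - q0) - (p 1 - q1))/2 with hB
    set C := p 1 - q1 with hC
    have hA0 : 0 ≤ A := by
      by_contra h; push_neg at h
      have := min_le_left A (min B C); rw [hp] at this; linarith
    have hB0 : 0 ≤ B := by
      by_contra h; push_neg at h
      have := (min_le_right A (min B C)).trans (min_le_left B C); rw [hp] at this; linarith
    have hC0 : 0 ≤ C := by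
      by_contra h; push_neg at h
      have := (min_le_right A (min B C)).trans (min_le_right B C); rw [hp] at this; linarith
    set x0 := (p 0 - q0)/r with hx0
    set x1 := (p 1 - q1)/r with hx1
    have hpx : fw ρ w (mk2 x0 x1) = p := hpre p
    have hAx : A = r * ((Real.sqrt 3 * (1 - x0) - x1)/2) := by
      rw [hA, hx0, hx1]; field_simp; ring
    have hBx : B = r * ((Real.sqrt 3 * x0 - x1)/2) := by
      rw [hB, hx0, hx1]; field_simp; ring
    have hCx : C = r * x1 := by rw [hC, hx1]; field_simp
    have hs3 := sqrt3_pos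
    -- one of A, B, C is zero
    have hone : A = 0 ∨ B = 0 ∨ C = 0 := by
      rcases min_cases A (min B C) with ⟨he, _⟩ | ⟨he, _⟩
      · left; rw [← hp, he]
      · rcases min_cases B C with ⟨he2, _⟩ | ⟨he2, _⟩
        · right; left; rw [← hp, he, he2]
        · right; right; rw [← hp, he, he2]
    rcases hone with h | h | h
    · -- on edge 1-2 : x = seg 1 2 (2*(1-x0))
      have hx1e : x1 = Real.sqrt 3 * (1 - x0) := by
        rw [hAx] at h
        rcases mul_eq_zero.1 h with h' | h'
        · exact absurd h' (ne_of_gt hr)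
        · linarith
      have hxeq : mk2 x0 x1 = seg 1 2 (2*(1-x0)) := by
        apply ee_ext
        · rw [mk2_c0, (seg12 (2*(1-x0))).1]; ring
        · rw [mk2_c1, (seg12 (2*(1-x0))).2, hx1e]; ring
      have ht0 : 0 ≤ 2*(1-x0) := by
        rw [hCx, hx1e] at hC0
        nlinarith [mul_pos hr hs3]
      have ht1 : 2*(1-x0) ≤ 1 := by
        rw [hBx] at hB0
        have : 0 ≤ Real.sqrt 3 * x0 - x1 := by nlinarith [hr]
        rw [hx1e] at this
        nlinarith [hs3]
      rw [← hpx, hxeq]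
      exact hedge 1 2 (by decide) _ ht0 ht1
    · -- on edge 0-2 : x = seg 0 2 (2*x0)
      have hx1e : x1 = Real.sqrt 3 * x0 := by
        rw [hBx] at h
        rcases mul_eq_zero.1 h with h' | h'
        · exact absurd h' (ne_of_gt hr)
        · linarith
      have hxeq : mk2 x0 x1 = seg 0 2 (2*x0) := by
        apply ee_ext
        · rw [mk2_c0, (seg02 (2*x0)).1]; ring
        · rw [mk2_c1, (seg02 (2*x0)).2, hx1e]; ring
      have ht0 : 0 ≤ 2*x0 := by
        rw [hCx, hx1e] at hC0
        nlinarith [mul_pos hr hs3]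
      have ht1 : 2*x0 ≤ 1 := by
        rw [hAx] at hA0
        have : 0 ≤ Real.sqrt 3 * (1-x0) - x1 := by nlinarith [hr]
        rw [hx1e] at this
        nlinarith [hs3]
      rw [← hpx, hxeq]
      exact hedge 0 2 (by decide) _ ht0 ht1
    · -- on edge 0-1 : x = seg 0 1 x0
      have hx1e : x1 = 0 := by
        rw [hCx] at h
        rcases mul_eq_zero.1 h with h' | h'
        · exact absurd h' (ne_of_gt hr)
        · exact h'
      have hxeq : mk2 x0 x1 = seg 0 1 x0 := by
        apply ee_ext
        · rw [mk2_c0, (seg01 x0).1]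
        · rw [mk2_c1, (seg01 x0).2, hx1e]
      have ht0 : 0 ≤ x0 := by
        rw [hBx] at hB0; rw [hx1e] at hB0
        nlinarith [mul_pos hr hs3]
      have ht1 : x0 ≤ 1 := by
        rw [hAx] at hA0; rw [hx1e] at hA0
        nlinarith [mul_pos hr hs3]
      rw [← hpx, hxeq]
      exact hedge 0 1 (by decide) _ ht0 ht1
  -- gg is positive at the center
  have hgctr : 0 < gg q0 q1 r (fw ρ w ctr) := by
    have e0 : fw ρ w ctr 0 = q0 + r * (1/2) := by rw [hrep0]; norm_num
    have e1 : fw ρ w ctr 1 = q1 + r * (Real.sqrt 3/6) := by rw [hrep1]; norm_num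
    unfold gg
    rw [e0, e1]
    have hs3 := sqrt3_pos
    apply lt_min
    · nlinarith
    · apply lt_min
      · nlinarith
      · nlinarith
  -- the component is contained in the positivity region
  have hsub : connectedComponentIn (Metric.cthickening ε S)ᶜ (fw ρ w ctr)
      ⊆ {p : EE | 0 < gg q0 q1 r p} := by
    apply IsPreconnected.subset_left_of_subset_union
      (u := {p : EE | 0 < gg q0 q1 r p}) (v := {p : EE | gg q0 q1 r p < 0})
      (isOpen_lt continuous_const (gg_cont q0 q1 r))
      (isOpen_lt (gg_cont q0 q1 r) continuous_const)
      (by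
        rw [Set.disjoint_left]
        intro p hp1 hp2
        simp only [mem_setOf_eq] at hp1 hp2
        linarith)
      (by
        intro p hp
        have hpU : p ∈ (Metric.cthickening ε S)ᶜ :=
          connectedComponentIn_subset _ _ hp
        have : gg q0 q1 r p ≠ 0 := fun h => hpU (hzero p h)
        rcases this.lt_or_gt with h | h
        · exact Or.inr h
        · exact Or.inl h)
      ⟨fw ρ w ctr, mem_connectedComponentIn hctr, hgctr⟩
      isPreconnected_connectedComponentIn
  -- positivity region is inside the cell
  intro p hp
  have hgp : 0 < gg q0 q1 r p := hsub hp
  unfold gg at hgp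
  have hA0 : 0 < (Real.sqrt 3 * (q0 + r - p 0) - (p 1 - q1))/2 :=
    lt_of_lt_of_le hgp (min_le_left _ _)
  have hB0 : 0 < (Real.sqrt 3 * (p 0 - q0) - (p 1 - q1))/2 :=
    lt_of_lt_of_le hgp ((min_le_right _ _).trans (min_le_left _ _))
  have hC0 : 0 < p 1 - q1 :=
    lt_of_lt_of_le hgp ((min_le_right _ _).trans (min_le_right _ _))
  set x0 := (p 0 - q0)/r with hx0
  set x1 := (p 1 - q1)/r with hx1
  have hpx : fw ρ w (mk2 x0 x1) = p := hpre p
  have hxT : mk2 x0 x1 ∈ sierpT := by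
    rw [mem_sierpT_iff]
    refine ⟨?_, ?_, ?_⟩
    · rw [mk2_c1, hx1]; exact div_nonneg hC0.le hr.le
    · rw [mk2_c0, mk2_c1, hx0, hx1]
      have key : p 1 - q1 ≤ Real.sqrt 3 * (p 0 - q0) := by linarith
      calc (p 1 - q1)/r ≤ (Real.sqrt 3*(p 0 - q0))/r := by gcongr
        _ = Real.sqrt 3 * ((p 0 - q0)/r) := by ring
    · rw [mk2_c0, mk2_c1, hx0, hx1]
      have key : p 1 - q1 ≤ Real.sqrt 3 * (r - (p 0 - q0)) := by nlinarith [sqrt3_pos]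
      calc (p 1 - q1)/r ≤ (Real.sqrt 3*(r - (p 0 - q0)))/r := by gcongr
        _ = Real.sqrt 3 * (1 - (p 0 - q0)/r) := by field_simp
  constructor
  · exact ⟨mk2 x0 x1, hxT, hpx⟩
  · rw [Metric.mem_closedBall, ← hpx, fw_dist hρ0.le]
    calc ρ ^ w.length * dist (mk2 x0 x1) ctr ≤ ρ ^ w.length * 1 :=
          mul_le_mul_of_nonneg_left (T_dist_ctr hxT) (by positivity)
      _ = ρ ^ w.length := mul_one _

lemma ctr_not_in_other {ρ : ℝ} (hρ0 : 0 < ρ) (hρ : ρ ≤ 1/2) :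
    ∀ w w' : List (Fin 3), w.length = w'.length → w ≠ w' →
      fw ρ w' ctr ∉ fw ρ w '' sierpT := by
  have hρ1 : ρ ≤ 1 := by linarith
  intro w
  induction w with
  | nil =>
    intro w' hlen hne
    have : w' = [] := List.length_eq_zero_iff.1 hlen.symm
    exact absurd this.symm hne
  | cons i t ih =>
    intro w' hlen hne
    cases w' with
    | nil => simp at hlen
    | cons i' t' =>
      by_cases hii : i' = i
      · subst hii
        rintro ⟨x, hxT, heq⟩
        have hlen' : t.length = t'.length := by simpa using hlen
        have hne' : t ≠ t' := fun h => hne (by rw [h])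
        have heq' : fw ρ t x = fw ρ t' ctr := F_inj hρ0 i' (by exact heq)
        exact ih t' hlen' hne' ⟨x, hxT, heq'⟩
      · rintro ⟨x, hxT, heq⟩
        -- heq : fw ρ (i :: t) x = fw ρ (i' :: t') ctr
        have h1 : (1 - ρ) * (Real.sqrt 3 / 2) ≤ Lu i (fw ρ (i :: t) x) := by
          show (1 - ρ) * (Real.sqrt 3 / 2) ≤ Lu i (F ρ i (fw ρ t x))
          rw [Lu_F, Lu_V_self]
          have := Lu_nonneg_T (fw_mem_T hρ0.le hρ1 t hxT) i
          nlinarith [hρ0.le]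
        have h2 : Lu i (fw ρ (i' :: t') ctr)
            ≤ ρ * (Real.sqrt 3/2 - ρ ^ t'.length * (Real.sqrt 3/3)) := by
          show Lu i (F ρ i' (fw ρ t' ctr)) ≤ _
          rw [Lu_F, Lu_V_ne (fun h => hii h.symm)]
          have := Lu_fw_ctr_le hρ0.le hρ1 t' i
          nlinarith [hρ0.le]
        rw [heq] at h1
        have hpow : 0 < ρ ^ t'.length := pow_pos hρ0 _
        nlinarith [sqrt3_pos, mul_pos (mul_pos hρ0 hpow) sqrt3_pos]

lemma ctr_in_complement {ρ ε : ℝ} (hρ0 : 0 < ρ) (hρ : ρ ≤ 1/2) (k : ℕ)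
    (hε2 : ε < ρ ^ k * Real.sqrt (1/3 - ρ + ρ^2 - ρ^3 + ρ^4))
    (w : List (Fin 3)) (hwk : w.length = k) :
    fw ρ w ctr ∈ (Metric.cthickening ε (sierpinski ρ))ᶜ := by
  intro hmem
  rw [Metric.mem_cthickening_iff] at hmem
  have hD : 0 < ρ ^ k * Real.sqrt (1/3 - ρ + ρ^2 - ρ^3 + ρ^4) := by
    have := poly_pos hρ0 hρ
    positivity
  have hlb : ENNReal.ofReal (ρ ^ k * Real.sqrt (1/3 - ρ + ρ^2 - ρ^3 + ρ^4))
      ≤ Metric.infEDist (fw ρ w ctr) (sierpinski ρ) := by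
    rw [Metric.le_infEDist]
    intro y hy
    rw [edist_dist]
    apply ENNReal.ofReal_le_ofReal
    have := dist_S_ge hρ0 hρ w y hy
    rwa [hwk] at this
  have hcon : ENNReal.ofReal (ρ ^ k * Real.sqrt (1/3 - ρ + ρ^2 - ρ^3 + ρ^4))
      ≤ ENNReal.ofReal ε := le_trans hlb hmem
  have := (ENNReal.ofReal_lt_ofReal_iff hD).2 hε2
  exact absurd hcon (not_le.2 this)

end SierpAux

open SierpAux in
/-- For every natural number `k`, if
`ρ^k·(1/2 − ρ) < ε < ρ^k·√(1/3 − ρ + ρ² − ρ³ + ρ⁴)`, then the complement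
`ℝ² \ S_ε` has at least `3^k` distinct connected components that are bounded
sets. -/
theorem sierpinski_complement_bounded_components
    (ρ : ℝ) (hρ0 : 0 < ρ) (hρ : ρ ≤ 1 / 2) (k : ℕ) (ε : ℝ)
    (hε1 : ρ ^ k * (1 / 2 - ρ) < ε)
    (hε2 : ε < ρ ^ k * Real.sqrt (1 / 3 - ρ + ρ ^ 2 - ρ ^ 3 + ρ ^ 4)) :
    ∃ 𝒞 : Finset (Set (EuclideanSpace ℝ (Fin 2))),
      3 ^ k ≤ 𝒞.card ∧
      ∀ C ∈ 𝒞,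
        (∃ p ∈ (Metric.cthickening ε (sierpinski ρ))ᶜ,
          C = connectedComponentIn (Metric.cthickening ε (sierpinski ρ))ᶜ p) ∧
        Bornology.IsBounded C := by
  classical
  have hε0 : 0 < ε := lt_of_le_of_lt (mul_nonneg (by positivity) (by linarith) : (0:ℝ) ≤ ρ^k * (1/2 - ρ)) hε1
  set U : Set (EuclideanSpace ℝ (Fin 2)) := (Metric.cthickening ε (sierpinski ρ))ᶜ with hU
  set comp : (Fin k → Fin 3) → Set (EuclideanSpace ℝ (Fin 2)) :=
    fun v => connectedComponentIn U (fw ρ (List.ofFn v) ctr) with hcomp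
  have hmemU : ∀ v : Fin k → Fin 3, fw ρ (List.ofFn v) ctr ∈ U :=
    fun v => ctr_in_complement hρ0 hρ k hε2 _ (List.length_ofFn (f := v))
  have hsub : ∀ v : Fin k → Fin 3,
      comp v ⊆ fw ρ (List.ofFn v) '' sierpT ∩
        Metric.closedBall (fw ρ (List.ofFn v) ctr) (ρ ^ (List.ofFn v).length) := by
    intro v
    apply main_comp hρ0 hρ hε0
    · rw [List.length_ofFn]; exact hε1
    · exact hmemU v
  have hinj : Function.Injective comp := by
    intro v v' h
    by_contra hne
    have hne' : List.ofFn v ≠ List.ofFn v' := fun hh => hne (List.ofFn_inj.1 hh)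
    have hlen : (List.ofFn v).length = (List.ofFn v').length := by
      rw [List.length_ofFn, List.length_ofFn]
    have hmem' : fw ρ (List.ofFn v') ctr ∈ comp v' := mem_connectedComponentIn (hmemU v')
    rw [← h] at hmem'
    have := (hsub v hmem').1
    exact ctr_not_in_other hρ0 hρ _ _ hlen hne' this
  refine ⟨Finset.image comp Finset.univ, ?_, ?_⟩
  · rw [Finset.card_image_of_injective _ hinj, Finset.card_univ]
    rw [Fintype.card_fun]
    simp
  · intro C hC
    obtain ⟨v, _, rfl⟩ := Finset.mem_image.1 hC
    constructor
    · exact ⟨fw ρ (List.ofFn v) ctr, hmemU v, rfl⟩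
    · exact (Metric.isBounded_closedBall).subset
        (subset_trans (hsub v) (Set.inter_subset_right))
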